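/- (Bias of the Horvitz–Thompson variance estimator) Define the variance estimator V̂ = (1/N²)∑_{i=1}^N 1_{A_i}(1−π_i)(y_i/π_i)² + (1/N²)∑_{i=1}^N ∑_{j≠i, π_{ij}>0} 1_{A_i ∩ A_j} ((π_{ij} − π_i π_j)/π_{ij}) (y_i/π_i)(y_j/π_j). Then E[V̂] = Var(Ŷ) + A, where A = (1/N²)∑_{i=1}^N ∑_{j≠i, π_{ij}=0} y_i y_j. -/

import Mathlib

open MeasureTheory

section HTaux
set_option linter.unusedSectionVars false
variable {Ω : Type*} [MeasurableSpace Ω] (P : Measure Ω) [IsProbabilityMeasure P]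

lemma ht_ind_integrable {s : Set Ω} (hs : MeasurableSet s) :
    Integrable (s.indicator (fun _ => (1:ℝ))) P :=
  (integrable_const 1).indicator hs

lemma ht_ind_integral {s : Set Ω} (hs : MeasurableSet s) :
    ∫ ω, s.indicator (fun _ => (1:ℝ)) ω ∂P = (P s).toReal := by
  rw [integral_indicator_const (1:ℝ) hs]; simp; rfl

lemma ht_cov_fun {s t : Set Ω} (a b : ℝ) (ω : Ω) :
    (s.indicator (fun _ => (1:ℝ)) ω - a) * (t.indicator (fun _ => (1:ℝ)) ω - b)
      = (s ∩ t).indicator (fun _ => (1:ℝ)) ω - b * s.indicator (fun _ => (1:ℝ)) ω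
        - a * t.indicator (fun _ => (1:ℝ)) ω + a * b := by
  by_cases hi : ω ∈ s <;> by_cases hj : ω ∈ t <;>
    simp [Set.indicator_apply, hi, hj, Set.mem_inter_iff] <;> ring

lemma ht_cov_integrable {s t : Set Ω} (hs : MeasurableSet s) (ht : MeasurableSet t) (a b : ℝ) :
    Integrable (fun ω => (s.indicator (fun _ => (1:ℝ)) ω - a)
      * (t.indicator (fun _ => (1:ℝ)) ω - b)) P := by
  simp only [ht_cov_fun]
  exact (((ht_ind_integrable P (hs.inter ht)).sub
    ((ht_ind_integrable P hs).const_mul b)).sub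
    ((ht_ind_integrable P ht).const_mul a)).add (integrable_const _)

lemma ht_cov_integral {s t : Set Ω} (hs : MeasurableSet s) (ht : MeasurableSet t) :
    ∫ ω, (s.indicator (fun _ => (1:ℝ)) ω - (P s).toReal)
        * (t.indicator (fun _ => (1:ℝ)) ω - (P t).toReal) ∂P
      = (P (s ∩ t)).toReal - (P s).toReal * (P t).toReal := by
  simp only [ht_cov_fun]
  rw [integral_add, integral_sub, integral_sub, integral_const_mul, integral_const_mul,
      integral_const, ht_ind_integral P hs, ht_ind_integral P ht,
      ht_ind_integral P (hs.inter ht)]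
  · simp; ring
  · exact ht_ind_integrable P (hs.inter ht)
  · exact (ht_ind_integrable P hs).const_mul _
  · exact (ht_ind_integrable P (hs.inter ht)).sub ((ht_ind_integrable P hs).const_mul _)
  · exact (ht_ind_integrable P ht).const_mul _
  · exact ((ht_ind_integrable P (hs.inter ht)).sub ((ht_ind_integrable P hs).const_mul _)).sub
      ((ht_ind_integrable P ht).const_mul _)
  · exact integrable_const _
end HTaux

/-- **Bias of the Horvitz–Thompson variance estimator.**
With `V̂ = (1/N²) ∑ᵢ 1_{Aᵢ}(1−πᵢ)(yᵢ/πᵢ)²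
      + (1/N²) ∑ᵢ ∑_{j≠i, π_{ij}>0} 1_{Aᵢ∩Aⱼ}((π_{ij} − πᵢπⱼ)/π_{ij})(yᵢ/πᵢ)(yⱼ/πⱼ)`,
one has `E[V̂] = Var(Ŷ) + A` where `A = (1/N²) ∑ᵢ ∑_{j≠i, π_{ij}=0} yᵢ yⱼ`. -/
theorem horvitz_thompson_variance_estimator_bias
    {Ω : Type*} [MeasurableSpace Ω] (P : Measure Ω) [IsProbabilityMeasure P]
    (N : ℕ) (hN : 0 < N)
    (A : Fin N → Set Ω) (hA : ∀ i, MeasurableSet (A i))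
    (y π : Fin N → ℝ) (πij : Fin N → Fin N → ℝ)
    (hπ : ∀ i, π i = (P (A i)).toReal) (hπpos : ∀ i, 0 < π i)
    (hπij : ∀ i j, i ≠ j → πij i j = (P (A i ∩ A j)).toReal)
    (Yhat Vhat : Ω → ℝ)
    (hY : Yhat = fun ω =>
      (1 / (N : ℝ)) * ∑ i, (A i).indicator (fun _ => (1 : ℝ)) ω * y i / π i)
    (hV : Vhat = fun ω =>
      (1 / (N : ℝ) ^ 2) * ∑ i, (A i).indicator (fun _ => (1 : ℝ)) ω
          * (1 - π i) * (y i / π i) ^ 2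
        + (1 / (N : ℝ) ^ 2) * ∑ i,
            ∑ j ∈ Finset.univ.filter (fun j => j ≠ i ∧ 0 < πij i j),
              (A i ∩ A j).indicator (fun _ => (1 : ℝ)) ω
                * ((πij i j - π i * π j) / πij i j) * (y i / π i) * (y j / π j)) :
    ∫ ω, Vhat ω ∂P
      = (∫ ω, (Yhat ω - ∫ x, Yhat x ∂P) ^ 2 ∂P)
        + (1 / (N : ℝ) ^ 2) * ∑ i,
            ∑ j ∈ Finset.univ.filter (fun j => j ≠ i ∧ πij i j = 0), y i * y j := by
  classical
  set c : Fin N → ℝ := fun i => y i / π i with hc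
  -- mean of Yhat
  have hint_i : ∀ i : Fin N,
      Integrable (fun ω => (A i).indicator (fun _ => (1:ℝ)) ω * y i / π i) P := by
    intro i
    have : (fun ω => (A i).indicator (fun _ => (1:ℝ)) ω * y i / π i)
        = fun ω => (A i).indicator (fun _ => (1:ℝ)) ω * (y i / π i) := by
      funext ω; ring
    rw [this]
    exact (ht_ind_integrable P (hA i)).mul_const _
  have hm : ∫ x, Yhat x ∂P = (1/(N:ℝ)) * ∑ i, π i * c i := by
    rw [hY, integral_const_mul, integral_finset_sum _ (fun i _ => hint_i i)]
    congr 1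
    refine Finset.sum_congr rfl fun i _ => ?_
    have : (fun ω => (A i).indicator (fun _ => (1:ℝ)) ω * y i / π i)
        = fun ω => (A i).indicator (fun _ => (1:ℝ)) ω * (y i / π i) := by
      funext ω; ring
    rw [this, integral_mul_const, ht_ind_integral P (hA i), ← hπ i]
  -- deviation
  have hdev : ∀ ω, Yhat ω - ∫ x, Yhat x ∂P
      = (1/(N:ℝ)) * ∑ i, ((A i).indicator (fun _ => (1:ℝ)) ω - π i) * c i := by
    intro ω
    rw [hm, hY]
    rw [← mul_sub, ← Finset.sum_sub_distrib]
    congr 1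
    refine Finset.sum_congr rfl fun i _ => ?_
    simp only [hc]
    ring
  have hsq : ∀ ω, (Yhat ω - ∫ x, Yhat x ∂P)^2
      = (1/(N:ℝ)^2) * ∑ i, ∑ j,
          ((A i).indicator (fun _=>(1:ℝ)) ω - π i) * ((A j).indicator (fun _=>(1:ℝ)) ω - π j)
            * (c i * c j) := by
    intro ω
    rw [hdev ω, mul_pow, sq (∑ i, ((A i).indicator (fun _ => (1:ℝ)) ω - π i) * c i),
      Finset.sum_mul_sum]
    rw [show ((1:ℝ)/N)^2 = 1/(N:ℝ)^2 by rw [div_pow]; norm_num]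
    congr 1
    exact Finset.sum_congr rfl fun i _ => Finset.sum_congr rfl fun j _ => by ring
  have hvar : ∫ ω, (Yhat ω - ∫ x, Yhat x ∂P)^2 ∂P
      = (1/(N:ℝ)^2) * ∑ i, ∑ j, ((P (A i ∩ A j)).toReal - π i * π j) * (c i * c j) := by
    simp only [hsq]
    rw [integral_const_mul,
      integral_finset_sum _ (fun i _ => integrable_finset_sum _ (fun j _ =>
        (ht_cov_integrable P (hA i) (hA j) (π i) (π j)).mul_const _))]
    congr 1
    refine Finset.sum_congr rfl fun i _ => ?_
    rw [integral_finset_sum _ (fun j _ =>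
      (ht_cov_integrable P (hA i) (hA j) (π i) (π j)).mul_const _)]
    refine Finset.sum_congr rfl fun j _ => ?_
    rw [integral_mul_const, hπ i, hπ j, ht_cov_integral P (hA i) (hA j)]
  -- mean of Vhat
  have hI1 : ∀ i : Fin N,
      Integrable (fun ω => (A i).indicator (fun _ => (1:ℝ)) ω * (1 - π i) * (y i / π i)^2) P := by
    intro i
    exact ((ht_ind_integrable P (hA i)).mul_const _).mul_const _
  have hI2 : ∀ i j : Fin N, Integrable (fun ω => (A i ∩ A j).indicator (fun _ => (1:ℝ)) ω
      * ((πij i j - π i * π j) / πij i j) * (y i / π i) * (y j / π j)) P := by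
    intro i j
    exact (((ht_ind_integrable P ((hA i).inter (hA j))).mul_const _).mul_const _).mul_const _
  have hEV : ∫ ω, Vhat ω ∂P
      = (1/(N:ℝ)^2) * ∑ i, π i * (1 - π i) * (y i / π i)^2
        + (1/(N:ℝ)^2) * ∑ i, ∑ j ∈ Finset.univ.filter (fun j => j ≠ i ∧ 0 < πij i j),
            (P (A i ∩ A j)).toReal * ((πij i j - π i * π j) / πij i j) * (y i / π i) * (y j / π j) := by
    rw [hV, integral_add, integral_const_mul, integral_const_mul,
      integral_finset_sum _ (fun i _ => hI1 i),
      integral_finset_sum _ (fun i _ => integrable_finset_sum _ (fun j _ => hI2 i j))]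
    · congr 1
      · congr 1
        refine Finset.sum_congr rfl fun i _ => ?_
        rw [integral_mul_const, integral_mul_const, ht_ind_integral P (hA i), ← hπ i]
      · congr 1
        refine Finset.sum_congr rfl fun i _ => ?_
        rw [integral_finset_sum _ (fun j _ => hI2 i j)]
        refine Finset.sum_congr rfl fun j _ => ?_
        rw [integral_mul_const, integral_mul_const, integral_mul_const,
          ht_ind_integral P ((hA i).inter (hA j))]
    · exact (integrable_finset_sum _ (fun i _ => hI1 i)).const_mul _
    · exact (integrable_finset_sum _ (fun i _ =>
        integrable_finset_sum _ (fun j _ => hI2 i j))).const_mul _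
  rw [hEV, hvar, ← mul_add, ← mul_add]
  congr 1
  rw [← Finset.sum_add_distrib, ← Finset.sum_add_distrib]
  refine Finset.sum_congr rfl fun i _ => ?_
  -- split the full inner sum on the RHS
  rw [← Finset.add_sum_erase Finset.univ _ (Finset.mem_univ i),
    ← Finset.sum_filter_add_sum_filter_not (Finset.univ.erase i) (fun j => 0 < πij i j)]
  have hdiag : π i * (1 - π i) * (y i / π i)^2
      = ((P (A i ∩ A i)).toReal - π i * π i) * (c i * c i) := by
    rw [Set.inter_self, ← hπ i]
    simp only [hc]; ring
  have hpos_sum :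
      ∑ j ∈ Finset.univ.filter (fun j => j ≠ i ∧ 0 < πij i j),
        (P (A i ∩ A j)).toReal * ((πij i j - π i * π j) / πij i j) * (y i / π i) * (y j / π j)
      = ∑ j ∈ (Finset.univ.erase i).filter (fun j => 0 < πij i j),
        ((P (A i ∩ A j)).toReal - π i * π j) * (c i * c j) := by
    rw [show Finset.univ.filter (fun j => j ≠ i ∧ 0 < πij i j)
        = (Finset.univ.erase i).filter (fun j => 0 < πij i j) by
      ext j; simp [Finset.mem_erase, and_comm]]
    refine Finset.sum_congr rfl fun j hj => ?_
    simp only [Finset.mem_filter, Finset.mem_erase] at hj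
    have hne : i ≠ j := (hj.1.1).symm
    have h0 : πij i j ≠ 0 := ne_of_gt hj.2
    rw [← hπij i j hne]
    simp only [hc]
    field_simp
  have hzero_sum :
      ∑ j ∈ (Finset.univ.erase i).filter (fun j => ¬ 0 < πij i j),
        ((P (A i ∩ A j)).toReal - π i * π j) * (c i * c j)
      = - ∑ j ∈ Finset.univ.filter (fun j => j ≠ i ∧ πij i j = 0), y i * y j := by
    rw [show (Finset.univ.erase i).filter (fun j => ¬ 0 < πij i j)
        = Finset.univ.filter (fun j => j ≠ i ∧ πij i j = 0) by
      ext j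
      simp only [Finset.mem_filter, Finset.mem_erase, Finset.mem_univ, true_and, and_true,
        not_lt]
      constructor
      · rintro ⟨hj, hle⟩
        refine ⟨hj, le_antisymm hle ?_⟩
        rw [hπij i j hj.symm]
        exact ENNReal.toReal_nonneg
      · rintro ⟨hj, h0⟩
        exact ⟨hj, le_of_eq h0⟩]
    rw [← Finset.sum_neg_distrib]
    refine Finset.sum_congr rfl fun j hj => ?_
    simp only [Finset.mem_filter, Finset.mem_univ, true_and] at hj
    have hμ : (P (A i ∩ A j)).toReal = 0 := by rw [← hπij i j hj.1.symm]; exact hj.2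
    rw [hμ]
    simp only [hc]
    have hi' := (hπpos i).ne'
    have hj' := (hπpos j).ne'
    field_simp
    ring
  rw [hpos_sum, hdiag, hzero_sum]
  ring
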